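/- The center of the nilHecke ring NH_m is the ring of symmetric polynomials ℤ[x₁,...,x_m]^{S_m}. -/

import Mathlib

open MvPolynomial

private lemma rename_perm_mul {m : ℕ} (p : MvPolynomial (Fin m) ℤ)
    (σ τ : Equiv.Perm (Fin m)) (h1 : rename σ p = p) (h2 : rename τ p = p) :
    rename (σ * τ) p = p := by
  have : ⇑(σ * τ) = ⇑σ ∘ ⇑τ := rfl
  rw [this, ← rename_rename, h2, h1]

private lemma symm_of_adjacent {m : ℕ} (p : MvPolynomial (Fin m) ℤ)
    (h : ∀ (a : ℕ) (ha : a + 1 < m),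
      rename (Equiv.swap (⟨a, Nat.lt_of_succ_lt ha⟩ : Fin m) ⟨a + 1, ha⟩) p = p) :
    ∀ σ : Equiv.Perm (Fin m), rename σ p = p := by
  have h1 : rename (⇑(1 : Equiv.Perm (Fin m))) p = p := by
    have : ⇑(1 : Equiv.Perm (Fin m)) = id := rfl
    rw [this, rename_id, AlgHom.id_apply]
  match m with
  | 0 =>
    intro σ
    have : σ = 1 := Subsingleton.elim _ _
    rw [this]; exact h1
  | n + 1 =>
    intro σ
    have hσ : σ ∈ Submonoid.closure
        (Set.range fun i : Fin n => Equiv.swap i.castSucc i.succ) := by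
      rw [Equiv.Perm.mclosure_swap_castSucc_succ]; trivial
    refine Submonoid.closure_induction ?_ h1 (fun a b _ _ ha hb => rename_perm_mul p a b ha hb) hσ
    rintro τ ⟨i, rfl⟩
    show rename ⇑(Equiv.swap i.castSucc i.succ) p = p
    have hi : (i : ℕ) + 1 < n + 1 := Nat.succ_lt_succ i.isLt
    have e1 : i.castSucc = (⟨(i : ℕ), Nat.lt_of_succ_lt hi⟩ : Fin (n + 1)) := rfl
    have e2 : i.succ = (⟨(i : ℕ) + 1, hi⟩ : Fin (n + 1)) := rfl
    rw [e1, e2]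
    exact h (i : ℕ) hi

/-- the center of the nilHecke ring NH_m is the ring of symmetric
polynomials: realizing NH_m as the subalgebra of End(ℤ[x₁,...,x_m]) generated by
the multiplication operators x_a and the divided difference operators ∂_a, an
element z ∈ NH_m is central if and only if z is multiplication by a symmetric
polynomial. -/
theorem nilHecke_center_symmetric (m : ℕ)
    (Dd : ℕ → Module.End ℤ (MvPolynomial (Fin m) ℤ))
    (hDd : ∀ (a : ℕ) (h : a + 1 < m) (f : MvPolynomial (Fin m) ℤ),
      (X (⟨a, Nat.lt_of_succ_lt h⟩ : Fin m) - X ⟨a + 1, h⟩) * Dd a f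
        = f - rename (Equiv.swap (⟨a, Nat.lt_of_succ_lt h⟩ : Fin m) ⟨a + 1, h⟩) f) :
    let NH : Subalgebra ℤ (Module.End ℤ (MvPolynomial (Fin m) ℤ)) :=
      Algebra.adjoin ℤ
        ((Set.range fun a : Fin m =>
            (LinearMap.mulLeft ℤ (X a) : Module.End ℤ (MvPolynomial (Fin m) ℤ))) ∪
         (Dd '' {a | a + 1 < m}))
    ∀ z ∈ NH, ((∀ w ∈ NH, z * w = w * z) ↔
      ∃ p : MvPolynomial (Fin m) ℤ,
        (∀ σ : Equiv.Perm (Fin m), rename σ p = p) ∧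
        z = (LinearMap.mulLeft ℤ p : Module.End ℤ (MvPolynomial (Fin m) ℤ))) := by
  intro NH z hz
  have hXsub : ∀ (a : ℕ) (ha : a + 1 < m),
      (X (⟨a, Nat.lt_of_succ_lt ha⟩ : Fin m) - X (⟨a + 1, ha⟩ : Fin m) : MvPolynomial (Fin m) ℤ) ≠ 0 := by
    intro a ha hcon
    have hne : (⟨a, Nat.lt_of_succ_lt ha⟩ : Fin m) ≠ ⟨a + 1, ha⟩ := by
      intro he
      exact absurd (congrArg Fin.val he) (by simp)
    have := sub_eq_zero.mp hcon
    exact hne (MvPolynomial.X_injective this)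
  constructor
  · -- central → mult by symmetric polynomial
    intro hcomm
    set p : MvPolynomial (Fin m) ℤ := z 1 with hp
    -- z commutes with mulLeft (X a)
    have hXa : ∀ a : Fin m, ∀ f, z (X a * f) = X a * z f := by
      intro a f
      have hmem : (LinearMap.mulLeft ℤ (X a) : Module.End ℤ (MvPolynomial (Fin m) ℤ)) ∈ NH :=
        Algebra.subset_adjoin (Or.inl ⟨a, rfl⟩)
      have := hcomm _ hmem
      have := congrFun (congrArg DFunLike.coe this) f
      simpa using this
    -- z commutes with multiplication by any polynomial
    have hmul : ∀ q f, z (q * f) = q * z f := by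
      intro q
      induction q using MvPolynomial.induction_on with
      | C n =>
        intro f
        rw [MvPolynomial.C_mul', map_smul, MvPolynomial.C_mul']
      | add q r hq hr =>
        intro f
        rw [add_mul, map_add, hq, hr, add_mul]
      | mul_X q i hq =>
        intro f
        calc z (q * X i * f) = z (q * (X i * f)) := by ring_nf
          _ = q * z (X i * f) := hq _
          _ = q * (X i * z f) := by rw [hXa]
          _ = q * X i * z f := by ring
    have hzp : z = (LinearMap.mulLeft ℤ p : Module.End ℤ (MvPolynomial (Fin m) ℤ)) := by
      apply LinearMap.ext
      intro f
      have : z (f * 1) = f * z 1 := hmul f 1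
      simpa [mul_comm] using this
    refine ⟨p, ?_, hzp⟩
    apply symm_of_adjacent
    intro a ha
    -- z commutes with Dd a
    have hmem : Dd a ∈ NH := Algebra.subset_adjoin (Or.inr ⟨a, ha, rfl⟩)
    have hc := hcomm _ hmem
    have hc1 := congrFun (congrArg DFunLike.coe hc) (1 : MvPolynomial (Fin m) ℤ)
    simp only [Module.End.mul_apply] at hc1
    -- hc1 : z (Dd a 1) = Dd a (z 1) = Dd a p
    have h1 : z (Dd a 1) = Dd a 1 * p := by
      have := hmul (Dd a 1) 1
      simpa [mul_comm] using this
    have key : (X (⟨a, Nat.lt_of_succ_lt ha⟩ : Fin m) - X (⟨a + 1, ha⟩ : Fin m)) * (Dd a p)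
        = (X (⟨a, Nat.lt_of_succ_lt ha⟩ : Fin m) - X (⟨a + 1, ha⟩ : Fin m)) * (Dd a 1 * p) := by
      rw [← hc1, h1]
    have hd1 : (X (⟨a, Nat.lt_of_succ_lt ha⟩ : Fin m) - X (⟨a + 1, ha⟩ : Fin m)) * Dd a 1 = 0 := by
      rw [hDd a ha 1]
      simp
    have : p - rename (Equiv.swap (⟨a, Nat.lt_of_succ_lt ha⟩ : Fin m) ⟨a + 1, ha⟩) p = 0 := by
      rw [← hDd a ha p, key, ← mul_assoc, hd1, zero_mul]
    have := sub_eq_zero.mp this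
    exact this.symm
  · -- mult by symmetric polynomial → central
    rintro ⟨p, hsym, rfl⟩
    intro w hw
    have : NH ≤ Subalgebra.centralizer ℤ
        {(LinearMap.mulLeft ℤ p : Module.End ℤ (MvPolynomial (Fin m) ℤ))} := by
      apply Algebra.adjoin_le
      rintro g (⟨a, rfl⟩ | ⟨a, ha, rfl⟩)
      · simp only [SetLike.mem_coe, Subalgebra.mem_centralizer_iff]
        rintro y rfl
        apply LinearMap.ext
        intro f
        simp [Module.End.mul_apply]
        ring
      · simp only [SetLike.mem_coe, Subalgebra.mem_centralizer_iff]
        rintro y rfl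
        apply LinearMap.ext
        intro f
        simp only [Module.End.mul_apply, LinearMap.mulLeft_apply]
        -- goal : p * Dd a f = Dd a (p * f)
        have hs : rename (Equiv.swap (⟨a, Nat.lt_of_succ_lt ha⟩ : Fin m) ⟨a + 1, ha⟩) p = p :=
          hsym _
        apply mul_left_cancel₀ (hXsub a ha)
        rw [hDd a ha (p * f), map_mul, hs, ← mul_sub, ← hDd a ha f]
        ring
    have hcw := this hw
    rw [Subalgebra.mem_centralizer_iff] at hcw
    exact hcw _ (Set.mem_singleton _)
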